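/- If X is an extremally disconnected compact Hausdorff space, then the lattice C(X, ℝ) of real-valued continuous functions is Dedekind complete: every non-empty family of continuous functions that is bounded above has a least upper bound in C(X, ℝ). -/
import Mathlib

open Set

/-- If `X` is an extremally disconnected compact Hausdorff space, then `C(X, ℝ)` is
Dedekind complete: every non-empty family of continuous functions bounded above has a
least upper bound in `C(X, ℝ)`. -/
theorem dedekind_complete_of_extremallyDisconnected {X : Type*} [TopologicalSpace X]
    [CompactSpace X] [T2Space X] [ExtremallyDisconnected X] (S : Set C(X, ℝ))
    (hne : S.Nonempty) (hbdd : BddAbove S) : ∃ g : C(X, ℝ), IsLUB S g := by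
  obtain ⟨f0, hf0S⟩ := hne
  obtain ⟨b, hb⟩ := hbdd
  cases isEmpty_or_nonempty X with
  | inl h =>
    exact ⟨f0, fun f hf => ContinuousMap.le_def.mpr fun x => (h.false x).elim,
      fun c hc => hc hf0S⟩
  | inr h =>
    set U : ℚ → Set X := fun q => {x | ∃ f ∈ S, (q : ℝ) < f x} with hU
    have hUopen : ∀ q, IsOpen (U q) := by
      intro q
      have : U q = ⋃ f ∈ S, f ⁻¹' Ioi (q : ℝ) := by
        ext x; simp [hU]
      rw [this]
      exact isOpen_biUnion fun f _ => isOpen_Ioi.preimage f.continuous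
    set V : ℚ → Set X := fun q => closure (U q) with hV
    have hVopen : ∀ q, IsOpen (V q) := fun q =>
      ExtremallyDisconnected.open_closure _ (hUopen q)
    have hVclosed : ∀ q, IsClosed (V q) := fun q => isClosed_closure
    have hVmono : ∀ {q q' : ℚ}, q ≤ q' → V q' ⊆ V q := by
      intro q q' hqq'
      apply closure_mono
      rintro x ⟨f, hf, hx⟩
      exact ⟨f, hf, lt_of_le_of_lt (by exact_mod_cast hqq') hx⟩
    set A : X → Set ℝ := fun x => ((↑) : ℚ → ℝ) '' {q | x ∈ V q} with hA
    have hApos : ∀ x q, x ∈ V q → (q : ℝ) ∈ A x := fun x q hx => ⟨q, hx, rfl⟩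
    have hAle : ∀ x, ∀ r ∈ A x, r ≤ b x := by
      rintro x r ⟨q, hq, rfl⟩
      have hsub : V q ⊆ {y | (q : ℝ) ≤ b y} := by
        apply closure_minimal
        · rintro y ⟨f, hfS, hfy⟩
          exact le_trans hfy.le (ContinuousMap.le_def.mp (hb hfS) y)
        · exact isClosed_le continuous_const b.continuous
      exact hsub hq
    have hAbdd : ∀ x, BddAbove (A x) := fun x => ⟨b x, fun r hr => hAle x r hr⟩
    obtain ⟨x0, -, hm⟩ := isCompact_univ.exists_isMinOn univ_nonempty
      f0.continuous.continuousOn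
    rw [isMinOn_iff] at hm
    obtain ⟨q0, hq0⟩ := exists_rat_lt (f0 x0)
    have hq0univ : ∀ x, x ∈ V q0 := fun x =>
      subset_closure ⟨f0, hf0S, lt_of_lt_of_le hq0 (hm x (mem_univ x))⟩
    have hAne : ∀ x, (A x).Nonempty := fun x => ⟨q0, hApos x q0 (hq0univ x)⟩
    set g0 : X → ℝ := fun x => sSup (A x) with hg0
    have hlt : ∀ r : ℝ, IsOpen {x | g0 x < r} := by
      intro r
      rw [isOpen_iff_forall_mem_open]
      intro x hx
      obtain ⟨q, hq1, hq2⟩ := exists_rat_btwn (show g0 x < r from hx)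
      refine ⟨(V q)ᶜ, ?_, (hVclosed q).isOpen_compl, ?_⟩
      · intro y hy
        have hle : g0 y ≤ q := by
          apply csSup_le (hAne y)
          rintro r' ⟨q', hq', rfl⟩
          by_contra hgt
          push_neg at hgt
          have hqq : q ≤ q' := by exact_mod_cast hgt.le
          exact hy (hVmono hqq hq')
        exact lt_of_le_of_lt hle hq2
      · intro hxV
        exact absurd (le_csSup (hAbdd x) (hApos x q hxV)) (not_le.mpr hq1)
    have hgt : ∀ r : ℝ, IsOpen {x | r < g0 x} := by
      intro r
      rw [isOpen_iff_forall_mem_open]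
      intro x hx
      obtain ⟨a, ⟨q, hq, rfl⟩, hra⟩ := exists_lt_of_lt_csSup (hAne x) hx
      exact ⟨V q, fun y hy => lt_of_lt_of_le hra (le_csSup (hAbdd y) (hApos y q hy)),
        hVopen q, hq⟩
    have hcont : Continuous g0 := by
      rw [OrderTopology.topology_eq_generate_intervals (α := ℝ),
        continuous_generateFrom_iff]
      rintro s ⟨a, rfl | rfl⟩
      · exact hgt a
      · exact hlt a
    refine ⟨⟨g0, hcont⟩, ?_, ?_⟩
    · intro f hf
      rw [ContinuousMap.le_def]
      intro x
      by_contra hlt'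
      push_neg at hlt'
      obtain ⟨q, hq1, hq2⟩ := exists_rat_btwn hlt'
      have hxV : x ∈ V q := subset_closure ⟨f, hf, hq2⟩
      exact absurd (le_csSup (hAbdd x) (hApos x q hxV)) (not_le.mpr hq1)
    · intro c hc
      rw [ContinuousMap.le_def]
      intro x
      apply csSup_le (hAne x)
      rintro r ⟨q, hq, rfl⟩
      have hsub : V q ⊆ {y | (q : ℝ) ≤ c y} := by
        apply closure_minimal
        · rintro y ⟨f, hfS, hfy⟩
          exact le_trans hfy.le (ContinuousMap.le_def.mp (hc hfS) y)
        · exact isClosed_le continuous_const c.continuous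
      exact hsub hq
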